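/- Assume the insertion setup. If L and K are simple lattices, then M is a simple lattice. -/
import Mathlib


/-- A congruence of a lattice: an equivalence relation compatible with `⊔` and `⊓`. -/
structure LatCon (L : Type*) [Lattice L] where
  rel : L → L → Prop
  refl : ∀ x, rel x x
  symm : ∀ {x y}, rel x y → rel y x
  trans : ∀ {x y z}, rel x y → rel y z → rel x z
  sup : ∀ {x₁ y₁ x₂ y₂}, rel x₁ y₁ → rel x₂ y₂ → rel (x₁ ⊔ x₂) (y₁ ⊔ y₂)
  inf : ∀ {x₁ y₁ x₂ y₂}, rel x₁ y₁ → rel x₂ y₂ → rel (x₁ ⊓ x₂) (y₁ ⊓ y₂)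

/-- A lattice is simple if it has at least two elements and its only congruences
are the equality congruence `Δ` and the full congruence `∇`. -/
def IsSimpleLat (L : Type*) [Lattice L] : Prop :=
  Nontrivial L ∧ ∀ θ : LatCon L, (∀ x y, θ.rel x y ↔ x = y) ∨ (∀ x y, θ.rel x y)

/-- **Corollary.** (Insertion setup:) `M` is a lattice, `a < b` in `M`, `K = [a,b]` is the
interval of `M`, and `L` is a sublattice of `M` with `M = L ∪ K`, `L ∩ K = {a,b}`,
`b` covering `a` in `L`, and the comparabilities between `K` and `L \ K` as described.
If `L` and `K` are simple lattices, then `M` is a simple lattice. -/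
theorem simple_of_insertion {M : Type*} [Lattice M] (a b : M) (L : Sublattice M)
    (hab : a < b) (haL : a ∈ L) (hbL : b ∈ L)
    (hUnion : ∀ x : M, x ∈ L ∨ x ∈ Set.Icc a b)
    (hInter : (L : Set M) ∩ Set.Icc a b = {a, b})
    (hcov : ∀ l ∈ L, ¬(a < l ∧ l < b))
    (horder : ∀ k ∈ Set.Icc a b, ∀ l ∈ (L : Set M) \ Set.Icc a b,
      (k ≤ l ↔ b ≤ l ∨ (k = a ∧ a ≤ l)) ∧ (l ≤ k ↔ l ≤ a ∨ (k = b ∧ l ≤ b)))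
    (hLsimple : IsSimpleLat ↥L)
    (hKsimple : IsSimpleLat ↥(Set.Icc a b)) :
    IsSimpleLat M := by
  classical
  refine ⟨⟨a, b, hab.ne⟩, ?_⟩
  intro θ
  by_cases hΔ : ∀ x y, θ.rel x y ↔ x = y
  · exact Or.inl hΔ
  right
  push_neg at hΔ
  obtain ⟨x, y, hxy⟩ := hΔ
  have hrel : θ.rel x y ∧ x ≠ y := by
    rcases hxy with h | ⟨hn, he⟩
    · exact h
    · exact absurd (he ▸ θ.refl x) hn
  -- restrictions of θ to L and to K
  let θL : LatCon ↥L :=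
    { rel := fun p q => θ.rel p q
      refl := fun p => θ.refl p
      symm := fun h => θ.symm h
      trans := fun h₁ h₂ => θ.trans h₁ h₂
      sup := fun h₁ h₂ => θ.sup h₁ h₂
      inf := fun h₁ h₂ => θ.inf h₁ h₂ }
  let θK : LatCon ↥(Set.Icc a b) :=
    { rel := fun p q => θ.rel p q
      refl := fun p => θ.refl p
      symm := fun h => θ.symm h
      trans := fun h₁ h₂ => θ.trans h₁ h₂
      sup := fun h₁ h₂ => θ.sup h₁ h₂
      inf := fun h₁ h₂ => θ.inf h₁ h₂ }
  have haK : a ∈ Set.Icc a b := ⟨le_refl a, hab.le⟩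
  have hbK : b ∈ Set.Icc a b := ⟨hab.le, le_refl b⟩
  have keyK : ∀ u v : M, u ∈ Set.Icc a b → v ∈ Set.Icc a b → u ≠ v → θ.rel u v →
      θ.rel a b := by
    intro u v hu hv hne hr
    rcases hKsimple.2 θK with hd | hf
    · exact absurd (congrArg Subtype.val ((hd ⟨u, hu⟩ ⟨v, hv⟩).mp hr)) hne
    · exact hf ⟨a, haK⟩ ⟨b, hbK⟩
  have keyL : ∀ u v : M, u ∈ L → v ∈ L → u ≠ v → θ.rel u v → θ.rel a b := by
    intro u v hu hv hne hr
    rcases hLsimple.2 θL with hd | hf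
    · exact absurd (congrArg Subtype.val ((hd ⟨u, hu⟩ ⟨v, hv⟩).mp hr)) hne
    · exact hf ⟨a, haL⟩ ⟨b, hbL⟩
  set u := x ⊓ y with hu
  set v := x ⊔ y with hv
  have hru : θ.rel u v := by
    have h1 : θ.rel (x ⊓ y) (y ⊓ y) := θ.inf hrel.1 (θ.refl y)
    have h2 : θ.rel (y ⊔ y) (x ⊔ y) := θ.sup (θ.symm hrel.1) (θ.refl y)
    simpa using θ.trans (by simpa using h1) (by simpa using h2)
  have huv : u < v :=
    lt_of_le_of_ne inf_le_sup (fun h => hrel.2 (le_antisymm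
      (le_sup_left.trans (h.ge.trans inf_le_right))
      (le_sup_right.trans (h.ge.trans inf_le_left))))
  have hab' : θ.rel a b := by
    rcases hUnion u with huL | huK <;> rcases hUnion v with hvL | hvK
    · exact keyL u v huL hvL huv.ne hru
    · by_cases huK : u ∈ Set.Icc a b
      · exact keyK u v huK hvK huv.ne hru
      · rcases ((horder v hvK u ⟨huL, huK⟩).2).mp huv.le with hua | ⟨hvb', hub⟩
        · have h1 : θ.rel (u ⊔ a) (v ⊔ a) := θ.sup hru (θ.refl a)
          rw [sup_eq_right.mpr hua, sup_eq_left.mpr hvK.1] at h1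
          by_cases hav : a = v
          · exact keyL u v huL (hav ▸ haL) huv.ne hru
          · exact keyK a v haK hvK hav h1
        · have h1 : θ.rel (u ⊓ a) (v ⊓ a) := θ.inf hru (θ.refl a)
          rw [show v ⊓ a = a from inf_eq_right.mpr (le_of_le_of_eq hab.le hvb'.symm)] at h1
          have hne : u ⊓ a ≠ a := fun he => huK ⟨inf_eq_right.mp he, hub⟩
          exact keyL (u ⊓ a) a (L.infClosed huL haL) haL hne h1
    · by_cases hvK : v ∈ Set.Icc a b
      · exact keyK u v huK hvK huv.ne hru
      · rcases ((horder u huK v ⟨hvL, hvK⟩).1).mp huv.le with hbv | ⟨hua, _⟩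
        · have h1 : θ.rel (u ⊓ b) (v ⊓ b) := θ.inf hru (θ.refl b)
          rw [inf_eq_left.mpr huK.2, inf_eq_right.mpr hbv] at h1
          by_cases hub : u = b
          · -- then b ≤ v and u = b, so collapse in L instead: u = b, v ∈ L
            subst hub
            exact keyL u v hbL hvL huv.ne hru
          · exact keyK u b huK hbK hub h1
        · -- u = a : then u ∈ L, pair in L
          exact keyL u v (hua ▸ haL) hvL huv.ne hru
    · exact keyK u v huK hvK huv.ne hru
  have fullK : ∀ p, p ∈ Set.Icc a b → θ.rel p a := by
    rcases hKsimple.2 θK with hd | hf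
    · exact absurd (congrArg Subtype.val
        ((hd ⟨a, haK⟩ ⟨b, hbK⟩).mp hab')) hab.ne
    · intro p hp; exact hf ⟨p, hp⟩ ⟨a, haK⟩
  have fullL : ∀ p, p ∈ L → θ.rel p a := by
    rcases hLsimple.2 θL with hd | hf
    · exact absurd (congrArg Subtype.val
        ((hd ⟨a, haL⟩ ⟨b, hbL⟩).mp hab')) hab.ne
    · intro p hp; exact hf ⟨p, hp⟩ ⟨a, haL⟩
  intro p q
  have hp : θ.rel p a := (hUnion p).elim (fullL p) (fullK p)
  have hq : θ.rel q a := (hUnion q).elim (fullL q) (fullK q)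
  exact θ.trans hp (θ.symm hq)
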